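/- Let q₀,…,q₄ be homogeneous degree-2 polynomials in x₀,…,x₄ over a field of characteristic zero, and suppose that x₄ divides the polynomial q₀x₁³x₂³ + q₁x₀³x₂³ + q₂x₀³x₁³ − 3q₃x₀²x₁²x₂² + q₄·P, where P is a homogeneous degree-6 polynomial in x₀,…,x₄ in which x₀⁶ has nonzero coefficient. Then x₄ divides q₄, and there exist scalars a₀, a₁, a₂ such that modulo x₄: q₀ ≡ a₀x₀², q₁ ≡ a₁x₁², q₂ ≡ a₂x₂², and q₃ ≡ (1/3)(a₀x₁x₂ + a₁x₀x₂ + a₂x₀x₁). -/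

import Mathlib

open MvPolynomial

section Aux
variable {k : Type*} [CommSemiring k]

private lemma aux_coeff_mul_mono (p : MvPolynomial (Fin 5) k) (s d : Fin 5 →₀ ℕ) :
    coeff d (p * monomial s 1) = if s ≤ d then coeff (d - s) p else 0 := by
  classical
  rw [coeff_mul_monomial']
  split <;> simp

private lemma aux_deg5 (d : Fin 5 →₀ ℕ) :
    d.degree = d 0 + d 1 + d 2 + d 3 + d 4 := by
  rw [Finsupp.degree_apply, Finset.sum_subset (Finset.subset_univ d.support)
    (fun x _ hx => Finsupp.notMem_support_iff.mp hx)]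
  exact Fin.sum_univ_five _

private lemma aux_X_dvd {p : MvPolynomial (Fin 5) k}
    (h : ∀ d : Fin 5 →₀ ℕ, d 4 = 0 → coeff d p = 0) : X (R := k) 4 ∣ p := by
  classical
  rw [p.as_sum]
  apply Finset.dvd_sum
  intro d hd
  have hd4 : d 4 ≠ 0 := fun h0 => (mem_support_iff.mp hd) (h d h0)
  have hle : Finsupp.single 4 1 ≤ d := by
    rw [Finsupp.single_le_iff]; omega
  refine ⟨monomial (d - Finsupp.single 4 1) (coeff d p), ?_⟩
  rw [X, monomial_mul, one_mul, add_tsub_cancel_of_le hle]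

private lemma aux_ev0_coeff (p : MvPolynomial (Fin 5) k) (d : Fin 5 →₀ ℕ) :
    coeff d (aeval (fun i : Fin 5 => if i = 4 then 0 else X i) p : MvPolynomial (Fin 5) k)
      = if d 4 = 0 then coeff d p else 0 := by
  classical
  induction p using MvPolynomial.induction_on' with
  | add p q hp hq =>
    simp only [map_add, coeff_add, hp, hq]
    split_ifs <;> simp
  | monomial s a =>
    rw [aeval_monomial]
    by_cases hs : s 4 = 0
    · have hprod : (s.prod fun i e => (if i = 4 then 0 else X i : MvPolynomial (Fin 5) k) ^ e)
          = s.prod fun i e => X i ^ e := by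
        apply Finsupp.prod_congr
        intro i hi
        have hi4 : i ≠ 4 := fun h => (Finsupp.mem_support_iff.mp hi) (h ▸ hs)
        simp [hi4]
      rw [hprod, algebraMap_eq, ← monomial_eq, coeff_monomial]
      by_cases hd : d 4 = 0
      · simp [hd, coeff_monomial]
      · have hne : s ≠ d := fun h => hd (h ▸ hs)
        simp [hd, hne]
    · have hprod : (s.prod fun i e => (if i = 4 then 0 else X i : MvPolynomial (Fin 5) k) ^ e)
          = 0 := by
        rw [Finsupp.prod]
        apply Finset.prod_eq_zero (Finsupp.mem_support_iff.mpr hs)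
        simp [zero_pow hs]
      rw [hprod, mul_zero]
      by_cases hd : d 4 = 0
      · have hne : s ≠ d := fun h => hs (h ▸ hd)
        simp [hd, hne, coeff_monomial]
      · simp [hd]

end Aux

set_option maxHeartbeats 3200000 in
/-- Let `q₀,…,q₄` be homogeneous quadrics in `x₀,…,x₄` over a field of
characteristic zero, and suppose `x₄` divides
`q₀x₁³x₂³ + q₁x₀³x₂³ + q₂x₀³x₁³ − 3q₃x₀²x₁²x₂² + q₄·P`, where `P` is a homogeneous sextic
in which `x₀⁶` has nonzero coefficient.  Then `x₄ ∣ q₄`, and there exist scalars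
`a₀, a₁, a₂` such that modulo `x₄` (i.e. after substituting `x₄ = 0`):
`q₀ ≡ a₀x₀²`, `q₁ ≡ a₁x₁²`, `q₂ ≡ a₂x₂²`, `q₃ ≡ (1/3)(a₀x₁x₂ + a₁x₀x₂ + a₂x₀x₁)`. -/
theorem stmt_9 (k : Type*) [Field k] [CharZero k]
    (q : Fin 5 → MvPolynomial (Fin 5) k) (hq : ∀ i, (q i).IsHomogeneous 2)
    (P : MvPolynomial (Fin 5) k) (hP : P.IsHomogeneous 6)
    (hP6 : coeff (Finsupp.single (0 : Fin 5) 6) P ≠ 0)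
    (hdvd : (X 4 : MvPolynomial (Fin 5) k) ∣
      (q 0 * X 1 ^ 3 * X 2 ^ 3 + q 1 * X 0 ^ 3 * X 2 ^ 3 + q 2 * X 0 ^ 3 * X 1 ^ 3
        - 3 * q 3 * X 0 ^ 2 * X 1 ^ 2 * X 2 ^ 2 + q 4 * P)) :
    (X 4 : MvPolynomial (Fin 5) k) ∣ q 4 ∧
    ∃ a₀ a₁ a₂ : k,
      letI ev0 : MvPolynomial (Fin 5) k →ₐ[k] MvPolynomial (Fin 5) k :=
        aeval (fun i => if i = 4 then 0 else X i)
      ev0 (q 0) = C a₀ * X 0 ^ 2 ∧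
      ev0 (q 1) = C a₁ * X 1 ^ 2 ∧
      ev0 (q 2) = C a₂ * X 2 ^ 2 ∧
      ev0 (q 3) = C (3⁻¹ : k) * (C a₀ * X 1 * X 2 + C a₁ * X 0 * X 2 + C a₂ * X 0 * X 1) := by
  classical
  obtain ⟨c, hc⟩ := hdvd
  set s0 : Fin 5 →₀ ℕ := Finsupp.single 1 3 + Finsupp.single 2 3 with hs0
  set s1 : Fin 5 →₀ ℕ := Finsupp.single 0 3 + Finsupp.single 2 3 with hs1
  set s2 : Fin 5 →₀ ℕ := Finsupp.single 0 3 + Finsupp.single 1 3 with hs2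
  set s3 : Fin 5 →₀ ℕ := Finsupp.single 0 2 + Finsupp.single 1 2 + Finsupp.single 2 2 with hs3
  have hm0 : (monomial s0 1 : MvPolynomial (Fin 5) k) = X 1 ^ 3 * X 2 ^ 3 := by
    rw [X_pow_eq_monomial, X_pow_eq_monomial, monomial_mul, mul_one]
  have hm1 : (monomial s1 1 : MvPolynomial (Fin 5) k) = X 0 ^ 3 * X 2 ^ 3 := by
    rw [X_pow_eq_monomial, X_pow_eq_monomial, monomial_mul, mul_one]
  have hm2 : (monomial s2 1 : MvPolynomial (Fin 5) k) = X 0 ^ 3 * X 1 ^ 3 := by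
    rw [X_pow_eq_monomial, X_pow_eq_monomial, monomial_mul, mul_one]
  have hm3 : (monomial s3 1 : MvPolynomial (Fin 5) k) = X 0 ^ 2 * X 1 ^ 2 * X 2 ^ 2 := by
    rw [X_pow_eq_monomial, X_pow_eq_monomial, X_pow_eq_monomial, monomial_mul, monomial_mul,
      mul_one, mul_one]
  have h3C : (3 : MvPolynomial (Fin 5) k) = C (3 : k) := (map_ofNat C 3).symm
  have hbig : q 0 * X 1 ^ 3 * X 2 ^ 3 + q 1 * X 0 ^ 3 * X 2 ^ 3 + q 2 * X 0 ^ 3 * X 1 ^ 3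
        - 3 * q 3 * X 0 ^ 2 * X 1 ^ 2 * X 2 ^ 2 + q 4 * P
      = q 0 * monomial s0 1 + q 1 * monomial s1 1 + q 2 * monomial s2 1
        - C (3:k) * (q 3 * monomial s3 1) + q 4 * P := by
    rw [hm0, hm1, hm2, hm3, h3C]; ring
  have key : ∀ d : Fin 5 →₀ ℕ, d 4 = 0 →
      (if s0 ≤ d then coeff (d - s0) (q 0) else 0)
      + (if s1 ≤ d then coeff (d - s1) (q 1) else 0)
      + (if s2 ≤ d then coeff (d - s2) (q 2) else 0)
      - 3 * (if s3 ≤ d then coeff (d - s3) (q 3) else 0)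
      + coeff d (q 4 * P) = 0 := by
    intro d hd
    have h0 := congrArg (coeff d) hc
    rw [hbig, mul_comm (X (R:=k) (σ:=Fin 5) 4) c, coeff_mul_X'] at h0
    rw [if_neg (by simp [Finsupp.mem_support_iff, hd])] at h0
    simp only [coeff_add, coeff_sub, coeff_C_mul, aux_coeff_mul_mono] at h0
    linear_combination h0
  have hdeg : ∀ i (d : Fin 5 →₀ ℕ), coeff d (q i) ≠ 0 → d.degree = 2 := by
    intro i d h
    by_contra hne
    exact h ((hq i).coeff_eq_zero hne)
  have hPdeg : ∀ d : Fin 5 →₀ ℕ, coeff d P ≠ 0 → d.degree = 6 := by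
    intro d h
    by_contra hne
    exact h (hP.coeff_eq_zero hne)
  -- Step A : q₄ vanishes modulo x₄
  have hq40 : ∀ m : Fin 5 →₀ ℕ, m 4 = 0 → coeff m (q 4) = 0 := by
    by_contra hcon
    push_neg at hcon
    obtain ⟨m₀, hm04, hm0ne⟩ := hcon
    set T := (q 4).support.filter (fun m => m 4 = 0) with hT
    have hTne : T.Nonempty := ⟨m₀, by simp [hT, mem_support_iff, hm04, hm0ne]⟩
    obtain ⟨m, hmT, hmax⟩ := T.exists_max_image (fun m => m 0) hTne
    have hm4 : m 4 = 0 := (Finset.mem_filter.mp hmT).2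
    have hmq : coeff m (q 4) ≠ 0 := mem_support_iff.mp (Finset.mem_filter.mp hmT).1
    have hmdeg : m.degree = 2 := hdeg 4 m hmq
    rw [aux_deg5] at hmdeg
    set d : Fin 5 →₀ ℕ := m + Finsupp.single 0 6 with hdd
    have hd1 : d 1 = m 1 := by simp [hdd, Finsupp.single_apply]
    have hd2 : d 2 = m 2 := by simp [hdd, Finsupp.single_apply]
    have hd0 : d 0 = m 0 + 6 := by simp [hdd, Finsupp.single_apply]
    have hd4 : d 4 = 0 := by simp [hdd, hm4, Finsupp.single_apply]
    have hk := key d hd4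
    have hc0 : ¬ s0 ≤ d := by
      intro h
      have := (Finsupp.le_def.mp h) 1
      simp [hs0, Finsupp.single_apply, hd1] at this
      omega
    have hc1 : ¬ s1 ≤ d := by
      intro h
      have := (Finsupp.le_def.mp h) 2
      simp [hs1, Finsupp.single_apply, hd2] at this
      omega
    have hc2 : ¬ s2 ≤ d := by
      intro h
      have := (Finsupp.le_def.mp h) 1
      simp [hs2, Finsupp.single_apply, hd1] at this
      omega
    have hc3 : ¬ s3 ≤ d := by
      intro h
      have h1 := (Finsupp.le_def.mp h) 1
      have h2 := (Finsupp.le_def.mp h) 2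
      simp [hs3, Finsupp.single_apply, hd1, hd2] at h1 h2
      omega
    have h5 : coeff d (q 4 * P) = coeff m (q 4) * coeff (Finsupp.single 0 6) P := by
      rw [coeff_mul]
      apply Finset.sum_eq_single (m, Finsupp.single 0 6)
      · intro b hb hbne
        rw [Finset.HasAntidiagonal.mem_antidiagonal] at hb
        by_contra hprod
        have hb1 : coeff b.1 (q 4) ≠ 0 := fun h => hprod (by rw [h, zero_mul])
        have hb2 : coeff b.2 P ≠ 0 := fun h => hprod (by rw [h, mul_zero])
        have hb4 : b.1 4 + b.2 4 = 0 := by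
          have := DFunLike.congr_fun hb 4
          simpa [hd4] using this
        have hb1T : b.1 ∈ T := by
          rw [hT, Finset.mem_filter, mem_support_iff]
          exact ⟨hb1, by omega⟩
        have hble : b.1 0 ≤ m 0 := hmax _ hb1T
        have hb2deg : b.2.degree = 6 := hPdeg _ hb2
        rw [aux_deg5] at hb2deg
        have hsum0 : b.1 0 + b.2 0 = m 0 + 6 := by
          have := DFunLike.congr_fun hb 0
          simpa [hd0] using this
        have hb2eq : b.2 = Finsupp.single 0 6 := by
          ext j
          fin_cases j <;> simp [Finsupp.single_apply] <;> omega
        rw [hb2eq] at hb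
        have hb1eq : b.1 = m := by
          have : b.1 + Finsupp.single 0 6 = m + Finsupp.single 0 6 := by rw [hb, hdd]
          exact add_right_cancel this
        exact hbne (Prod.ext hb1eq hb2eq)
      · intro hnm
        exact absurd (Finset.HasAntidiagonal.mem_antidiagonal.mpr hdd.symm) hnm
    rw [if_neg hc0, if_neg hc1, if_neg hc2, if_neg hc3, h5] at hk
    have hx : coeff m (q 4) * coeff (Finsupp.single 0 6) P = 0 := by linear_combination hk
    rcases mul_eq_zero.mp hx with h | h
    · exact hmq h
    · exact hP6 h
  -- Step B : refined four-term identity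
  have hP5 : ∀ d : Fin 5 →₀ ℕ, d 4 = 0 → coeff d (q 4 * P) = 0 := by
    intro d hd
    rw [coeff_mul]
    apply Finset.sum_eq_zero
    intro b hb
    rw [Finset.HasAntidiagonal.mem_antidiagonal] at hb
    have hb4 : b.1 4 = 0 := by
      have := DFunLike.congr_fun hb 4
      simp [hd] at this
      omega
    rw [hq40 _ hb4, zero_mul]
  have key' : ∀ d : Fin 5 →₀ ℕ, d 4 = 0 →
      (if s0 ≤ d then coeff (d - s0) (q 0) else 0)
      + (if s1 ≤ d then coeff (d - s1) (q 1) else 0)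
      + (if s2 ≤ d then coeff (d - s2) (q 2) else 0)
      - 3 * (if s3 ≤ d then coeff (d - s3) (q 3) else 0) = 0 := by
    intro d hd
    have := key d hd
    rw [hP5 d hd] at this
    linear_combination this
  set n12 : Fin 5 →₀ ℕ := Finsupp.single 1 1 + Finsupp.single 2 1 with hn12
  set n02 : Fin 5 →₀ ℕ := Finsupp.single 0 1 + Finsupp.single 2 1 with hn02
  set n01 : Fin 5 →₀ ℕ := Finsupp.single 0 1 + Finsupp.single 1 1 with hn01
  -- vanishing of the non-exceptional coefficients of q₀, q₁, q₂
  have hq0z : ∀ m : Fin 5 →₀ ℕ, m 4 = 0 → m ≠ Finsupp.single 0 2 → coeff m (q 0) = 0 := by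
    intro m hm4 hmne
    by_contra hne
    have hmdeg := hdeg 0 m hne
    rw [aux_deg5] at hmdeg
    have hm0le : m 0 ≤ 1 := by
      by_contra hgt
      push_neg at hgt
      exact hmne (by ext j; fin_cases j <;> simp [Finsupp.single_apply] <;> omega)
    have hd4 : (m + s0) 4 = 0 := by simp [hs0, Finsupp.single_apply, hm4]
    have hk := key' (m + s0) hd4
    have hc1' : ¬ s1 ≤ m + s0 := by
      intro h
      have := (Finsupp.le_def.mp h) 0
      simp [hs1, hs0, Finsupp.single_apply] at this
      omega
    have hc2' : ¬ s2 ≤ m + s0 := by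
      intro h
      have := (Finsupp.le_def.mp h) 0
      simp [hs2, hs0, Finsupp.single_apply] at this
      omega
    have hc3' : ¬ s3 ≤ m + s0 := by
      intro h
      have := (Finsupp.le_def.mp h) 0
      simp [hs3, hs0, Finsupp.single_apply] at this
      omega
    rw [if_pos le_add_self, add_tsub_cancel_right, if_neg hc1', if_neg hc2', if_neg hc3'] at hk
    exact hne (by linear_combination hk)
  have hq1z : ∀ m : Fin 5 →₀ ℕ, m 4 = 0 → m ≠ Finsupp.single 1 2 → coeff m (q 1) = 0 := by
    intro m hm4 hmne
    by_contra hne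
    have hmdeg := hdeg 1 m hne
    rw [aux_deg5] at hmdeg
    have hm1le : m 1 ≤ 1 := by
      by_contra hgt
      push_neg at hgt
      exact hmne (by ext j; fin_cases j <;> simp [Finsupp.single_apply] <;> omega)
    have hd4 : (m + s1) 4 = 0 := by simp [hs1, Finsupp.single_apply, hm4]
    have hk := key' (m + s1) hd4
    have hc0' : ¬ s0 ≤ m + s1 := by
      intro h
      have := (Finsupp.le_def.mp h) 1
      simp [hs0, hs1, Finsupp.single_apply] at this
      omega
    have hc2' : ¬ s2 ≤ m + s1 := by
      intro h
      have := (Finsupp.le_def.mp h) 1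
      simp [hs2, hs1, Finsupp.single_apply] at this
      omega
    have hc3' : ¬ s3 ≤ m + s1 := by
      intro h
      have := (Finsupp.le_def.mp h) 1
      simp [hs3, hs1, Finsupp.single_apply] at this
      omega
    rw [if_neg hc0', if_pos le_add_self, add_tsub_cancel_right, if_neg hc2', if_neg hc3'] at hk
    exact hne (by linear_combination hk)
  have hq2z : ∀ m : Fin 5 →₀ ℕ, m 4 = 0 → m ≠ Finsupp.single 2 2 → coeff m (q 2) = 0 := by
    intro m hm4 hmne
    by_contra hne
    have hmdeg := hdeg 2 m hne
    rw [aux_deg5] at hmdeg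
    have hm2le : m 2 ≤ 1 := by
      by_contra hgt
      push_neg at hgt
      exact hmne (by ext j; fin_cases j <;> simp [Finsupp.single_apply] <;> omega)
    have hd4 : (m + s2) 4 = 0 := by simp [hs2, Finsupp.single_apply, hm4]
    have hk := key' (m + s2) hd4
    have hc0' : ¬ s0 ≤ m + s2 := by
      intro h
      have := (Finsupp.le_def.mp h) 2
      simp [hs0, hs2, Finsupp.single_apply] at this
      omega
    have hc1' : ¬ s1 ≤ m + s2 := by
      intro h
      have := (Finsupp.le_def.mp h) 2
      simp [hs1, hs2, Finsupp.single_apply] at this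
      omega
    have hc3' : ¬ s3 ≤ m + s2 := by
      intro h
      have := (Finsupp.le_def.mp h) 2
      simp [hs3, hs2, Finsupp.single_apply] at this
      omega
    rw [if_neg hc0', if_neg hc1', if_pos le_add_self, add_tsub_cancel_right, if_neg hc3'] at hk
    exact hne (by linear_combination hk)
  -- vanishing of the non-exceptional coefficients of q₃
  have hq3z : ∀ n : Fin 5 →₀ ℕ, n 4 = 0 → n ≠ n12 → n ≠ n02 → n ≠ n01 →
      coeff n (q 3) = 0 := by
    intro n hn4 hne12 hne02 hne01
    by_contra hne
    have hmdeg := hdeg 3 n hne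
    rw [aux_deg5] at hmdeg
    have hd4 : (n + s3) 4 = 0 := by simp [hs3, Finsupp.single_apply, hn4]
    have hk := key' (n + s3) hd4
    have hc0' : ¬ s0 ≤ n + s3 := by
      intro h
      have h1 := (Finsupp.le_def.mp h) 1
      have h2 := (Finsupp.le_def.mp h) 2
      simp [hs0, hs3, Finsupp.single_apply] at h1 h2
      exact hne12 (by ext j; fin_cases j <;> simp [hn12, Finsupp.single_apply] <;> omega)
    have hc1' : ¬ s1 ≤ n + s3 := by
      intro h
      have h1 := (Finsupp.le_def.mp h) 0
      have h2 := (Finsupp.le_def.mp h) 2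
      simp [hs1, hs3, Finsupp.single_apply] at h1 h2
      exact hne02 (by ext j; fin_cases j <;> simp [hn02, Finsupp.single_apply] <;> omega)
    have hc2' : ¬ s2 ≤ n + s3 := by
      intro h
      have h1 := (Finsupp.le_def.mp h) 0
      have h2 := (Finsupp.le_def.mp h) 1
      simp [hs2, hs3, Finsupp.single_apply] at h1 h2
      exact hne01 (by ext j; fin_cases j <;> simp [hn01, Finsupp.single_apply] <;> omega)
    rw [if_neg hc0', if_neg hc1', if_neg hc2', if_pos le_add_self, add_tsub_cancel_right] at hk
    exact hne (by linear_combination (-(3:k)⁻¹) * hk)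
  -- the three relations
  have hrel0 : coeff (Finsupp.single 0 2) (q 0) = 3 * coeff n12 (q 3) := by
    have hd4 : ((Finsupp.single 0 2 + s0 : Fin 5 →₀ ℕ)) 4 = 0 := by simp [hs0, Finsupp.single_apply]
    have hk := key' (Finsupp.single 0 2 + s0) hd4
    have hc1' : ¬ s1 ≤ Finsupp.single 0 2 + s0 := by
      intro h
      have := (Finsupp.le_def.mp h) 0
      simp [hs1, hs0, Finsupp.single_apply] at this
    have hc2' : ¬ s2 ≤ Finsupp.single 0 2 + s0 := by
      intro h
      have := (Finsupp.le_def.mp h) 0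
      simp [hs2, hs0, Finsupp.single_apply] at this
    have hc3' : s3 ≤ Finsupp.single 0 2 + s0 := by
      rw [Finsupp.le_def]
      intro j
      fin_cases j <;> simp [hs3, hs0, Finsupp.single_apply]
    have hsub : Finsupp.single 0 2 + s0 - s3 = n12 := by
      ext j
      fin_cases j <;>
        simp [hs3, hs0, hn12, Finsupp.single_apply, Finsupp.tsub_apply]
    rw [if_pos le_add_self, add_tsub_cancel_right, if_neg hc1', if_neg hc2',
      if_pos hc3', hsub] at hk
    linear_combination hk
  have hrel1 : coeff (Finsupp.single 1 2) (q 1) = 3 * coeff n02 (q 3) := by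
    have hd4 : ((Finsupp.single 1 2 + s1 : Fin 5 →₀ ℕ)) 4 = 0 := by simp [hs1, Finsupp.single_apply]
    have hk := key' (Finsupp.single 1 2 + s1) hd4
    have hc0' : ¬ s0 ≤ Finsupp.single 1 2 + s1 := by
      intro h
      have := (Finsupp.le_def.mp h) 1
      simp [hs0, hs1, Finsupp.single_apply] at this
    have hc2' : ¬ s2 ≤ Finsupp.single 1 2 + s1 := by
      intro h
      have := (Finsupp.le_def.mp h) 1
      simp [hs2, hs1, Finsupp.single_apply] at this
    have hc3' : s3 ≤ Finsupp.single 1 2 + s1 := by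
      rw [Finsupp.le_def]
      intro j
      fin_cases j <;> simp [hs3, hs1, Finsupp.single_apply]
    have hsub : Finsupp.single 1 2 + s1 - s3 = n02 := by
      ext j
      fin_cases j <;>
        simp [hs3, hs1, hn02, Finsupp.single_apply, Finsupp.tsub_apply]
    rw [if_neg hc0', if_pos le_add_self, add_tsub_cancel_right, if_neg hc2',
      if_pos hc3', hsub] at hk
    linear_combination hk
  have hrel2 : coeff (Finsupp.single 2 2) (q 2) = 3 * coeff n01 (q 3) := by
    have hd4 : ((Finsupp.single 2 2 + s2 : Fin 5 →₀ ℕ)) 4 = 0 := by simp [hs2, Finsupp.single_apply]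
    have hk := key' (Finsupp.single 2 2 + s2) hd4
    have hc0' : ¬ s0 ≤ Finsupp.single 2 2 + s2 := by
      intro h
      have := (Finsupp.le_def.mp h) 2
      simp [hs0, hs2, Finsupp.single_apply] at this
    have hc1' : ¬ s1 ≤ Finsupp.single 2 2 + s2 := by
      intro h
      have := (Finsupp.le_def.mp h) 2
      simp [hs1, hs2, Finsupp.single_apply] at this
    have hc3' : s3 ≤ Finsupp.single 2 2 + s2 := by
      rw [Finsupp.le_def]
      intro j
      fin_cases j <;> simp [hs3, hs2, Finsupp.single_apply]
    have hsub : Finsupp.single 2 2 + s2 - s3 = n01 := by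
      ext j
      fin_cases j <;>
        simp [hs3, hs2, hn01, Finsupp.single_apply, Finsupp.tsub_apply]
    rw [if_neg hc0', if_neg hc1', if_pos le_add_self, add_tsub_cancel_right,
      if_pos hc3', hsub] at hk
    linear_combination hk
  -- disequalities and x₄-coordinates of the three mixed monomials
  have hne120 : n12 ≠ n02 := fun h => by
    have := DFunLike.congr_fun h 0
    simp [hn12, hn02, Finsupp.single_apply] at this
  have hne121 : n12 ≠ n01 := fun h => by
    have := DFunLike.congr_fun h 0
    simp [hn12, hn01, Finsupp.single_apply] at this
  have hne021 : n02 ≠ n01 := fun h => by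
    have := DFunLike.congr_fun h 1
    simp [hn02, hn01, Finsupp.single_apply] at this
  have h124 : n12 4 = 0 := by simp [hn12, Finsupp.single_apply]
  have h024 : n02 4 = 0 := by simp [hn02, Finsupp.single_apply]
  have h014 : n01 4 = 0 := by simp [hn01, Finsupp.single_apply]
  refine ⟨aux_X_dvd hq40, coeff (Finsupp.single 0 2) (q 0), coeff (Finsupp.single 1 2) (q 1),
    coeff (Finsupp.single 2 2) (q 2), ?_, ?_, ?_, ?_⟩
  · ext d
    rw [aux_ev0_coeff, C_mul_X_pow_eq_monomial, coeff_monomial]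
    by_cases hd4 : d 4 = 0
    · rw [if_pos hd4]
      by_cases hde : Finsupp.single (0 : Fin 5) 2 = d
      · rw [if_pos hde, ← hde]
      · rw [if_neg hde, hq0z d hd4 (fun h => hde h.symm)]
    · rw [if_neg hd4, if_neg (fun h : Finsupp.single (0 : Fin 5) 2 = d => hd4 (by
        rw [← h]; simp [Finsupp.single_apply]))]
  · ext d
    rw [aux_ev0_coeff, C_mul_X_pow_eq_monomial, coeff_monomial]
    by_cases hd4 : d 4 = 0
    · rw [if_pos hd4]
      by_cases hde : Finsupp.single (1 : Fin 5) 2 = d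
      · rw [if_pos hde, ← hde]
      · rw [if_neg hde, hq1z d hd4 (fun h => hde h.symm)]
    · rw [if_neg hd4, if_neg (fun h : Finsupp.single (1 : Fin 5) 2 = d => hd4 (by
        rw [← h]; simp [Finsupp.single_apply]))]
  · ext d
    rw [aux_ev0_coeff, C_mul_X_pow_eq_monomial, coeff_monomial]
    by_cases hd4 : d 4 = 0
    · rw [if_pos hd4]
      by_cases hde : Finsupp.single (2 : Fin 5) 2 = d
      · rw [if_pos hde, ← hde]
      · rw [if_neg hde, hq2z d hd4 (fun h => hde h.symm)]
    · rw [if_neg hd4, if_neg (fun h : Finsupp.single (2 : Fin 5) 2 = d => hd4 (by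
        rw [← h]; simp [Finsupp.single_apply]))]
  · have hm12 : (C (coeff (Finsupp.single 0 2) (q 0)) * X 1 * X 2 : MvPolynomial (Fin 5) k)
        = monomial n12 (coeff (Finsupp.single 0 2) (q 0)) := by
      rw [mul_assoc, X, X, monomial_mul, C_mul_monomial, one_mul, mul_one, hn12]
    have hm02 : (C (coeff (Finsupp.single 1 2) (q 1)) * X 0 * X 2 : MvPolynomial (Fin 5) k)
        = monomial n02 (coeff (Finsupp.single 1 2) (q 1)) := by
      rw [mul_assoc, X, X, monomial_mul, C_mul_monomial, one_mul, mul_one, hn02]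
    have hm01 : (C (coeff (Finsupp.single 2 2) (q 2)) * X 0 * X 1 : MvPolynomial (Fin 5) k)
        = monomial n01 (coeff (Finsupp.single 2 2) (q 2)) := by
      rw [mul_assoc, X, X, monomial_mul, C_mul_monomial, one_mul, mul_one, hn01]
    ext d
    rw [aux_ev0_coeff, hm12, hm02, hm01, coeff_C_mul, coeff_add, coeff_add,
      coeff_monomial, coeff_monomial, coeff_monomial]
    by_cases hd4 : d 4 = 0
    · rw [if_pos hd4]
      by_cases h12 : n12 = d
      · subst h12
        rw [if_pos rfl, if_neg (fun h => hne120 h.symm), if_neg (fun h => hne121 h.symm)]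
        linear_combination (-(3:k)⁻¹) * hrel0
      · by_cases h02 : n02 = d
        · subst h02
          rw [if_neg h12, if_pos rfl, if_neg (fun h => hne021 h.symm)]
          linear_combination (-(3:k)⁻¹) * hrel1
        · by_cases h01 : n01 = d
          · subst h01
            rw [if_neg h12, if_neg h02, if_pos rfl]
            linear_combination (-(3:k)⁻¹) * hrel2
          · rw [if_neg h12, if_neg h02, if_neg h01,
              hq3z d hd4 (fun h => h12 h.symm) (fun h => h02 h.symm) (fun h => h01 h.symm)]
            ring
    · rw [if_neg hd4, if_neg (fun h : n12 = d => hd4 (h ▸ h124)), if_neg (fun h : n02 = d => hd4 (h ▸ h024)),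
        if_neg (fun h : n01 = d => hd4 (h ▸ h014))]
      ring
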